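/- Let Γ and G be finite groups of the same order. Let e'(G,Γ) be the number of regular subgroups of the holomorph Hol(G) = G ⋊ Aut(G) (acting on G) that are isomorphic to Γ, and let e(G,Γ) be the number of regular subgroups of Perm(Γ) that are isomorphic to G and normalized by the left-translation subgroup λ(Γ). Then e(G,Γ) = (|Aut(Γ)| / |Aut(G)|) · e'(G,Γ). -/

import Mathlib

/-- A subgroup `N ≤ Perm Γ` is regular: its action on `Γ` is transitive and
the stabiliser of every point is trivial. -/
def IsRegularSubgroup (Γ : Type*) [Group Γ] (N : Subgroup (Equiv.Perm Γ)) : Prop :=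
  (∀ x y : Γ, ∃ ν ∈ N, ν x = y) ∧ ∀ ν ∈ N, ∀ x : Γ, ν x = x → ν = 1

/-- A subgroup `N ≤ Perm Γ` is normalised by the subgroup `λ(Γ)` of left translations. -/
def IsNormalizedByLeftTranslations (Γ : Type*) [Group Γ] (N : Subgroup (Equiv.Perm Γ)) : Prop :=
  ∀ γ : Γ, ∀ ν ∈ N, Equiv.mulLeft γ * ν * (Equiv.mulLeft γ)⁻¹ ∈ N

/-- The holomorph `Hol(G) = G ⋊ Aut(G)`. -/
abbrev Hol (G : Type*) [Group G] : Type _ :=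
  SemidirectProduct G (MulAut G) (MonoidHom.id (MulAut G))

/-- A subgroup `C ≤ Hol(G)` is regular for the action `[α,ψ]·β = α·ψ(β)` of
`Hol(G)` on `G`: transitive with trivial point stabilisers. -/
def IsRegularHolSubgroup (G : Type*) [Group G] (C : Subgroup (Hol G)) : Prop :=
  (∀ x y : G, ∃ h ∈ C, h.left * h.right x = y) ∧
    ∀ h ∈ C, ∀ x : G, h.left * h.right x = x → h = 1

section J
variable (G : Type*) [Group G]

/-- Left translation as a homomorphism to the permutation group. -/
def leftHom : G →* Equiv.Perm G where
  toFun := Equiv.mulLeft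
  map_one' := by ext x; simp
  map_mul' a b := by ext x; simp [mul_assoc]

@[simp] lemma leftHom_apply (g x : G) : leftHom G g x = g * x := rfl

/-- The evaluation homomorphism `Hol G →* Perm G`. -/
def jHom : Hol G →* Equiv.Perm G :=
  SemidirectProduct.lift (leftHom G) (MulAut.toPerm G) (by
    intro ψ
    ext g x
    simp [MulAut.conj, Equiv.Perm.mul_apply, MulAut.toPerm, Equiv.Perm.inv_def]
    change ψ g * x = ψ (g * ψ.symm x)
    simp)

@[simp] lemma jHom_apply (h : Hol G) (x : G) : jHom G h x = h.left * h.right x := rfl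

lemma jHom_injective : Function.Injective (jHom G) := by
  rw [injective_iff_map_eq_one]
  intro h hh
  have h1 : h.left * h.right 1 = 1 := by
    rw [← jHom_apply, hh]; rfl
  rw [map_one, mul_one] at h1
  refine SemidirectProduct.ext h1 ?_
  ext x
  have hx : h.left * h.right x = x := by rw [← jHom_apply, hh]; rfl
  rw [h1, one_mul] at hx
  simpa using hx

end J

section Forward
variable {Γ G : Type*} [Group Γ] [Group G]
variable (β : G →* Equiv.Perm Γ) (hinj : Function.Injective β)
  (hreg : IsRegularSubgroup Γ β.range)

/-- The orbit bijection `G ≃ Γ`, `g ↦ β g 1`. -/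
noncomputable def bEquiv : G ≃ Γ :=
  Equiv.ofBijective (fun g => β g 1)
    ⟨by
      intro g g' h
      simp only at h
      have h2 : β (g'⁻¹ * g) 1 = 1 := by
        rw [map_mul, map_inv, Equiv.Perm.mul_apply, h, Equiv.Perm.inv_def, Equiv.symm_apply_apply]
      have h3 : β (g'⁻¹ * g) = 1 := hreg.2 _ ⟨_, rfl⟩ 1 h2
      have h4 : g'⁻¹ * g = 1 := hinj (by rw [h3, map_one])
      exact (inv_mul_eq_one.mp h4).symm,
    by
      intro y
      obtain ⟨ν, ⟨g, rfl⟩, h⟩ := hreg.1 1 y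
      exact ⟨g, h⟩⟩

lemma bEquiv_apply (g : G) : bEquiv β hinj hreg g = β g 1 := rfl

lemma key1 (g x : G) : β g (bEquiv β hinj hreg x) = bEquiv β hinj hreg (g * x) := by
  rw [bEquiv_apply, bEquiv_apply, map_mul, Equiv.Perm.mul_apply]

lemma bEquiv_one : bEquiv β hinj hreg 1 = 1 := by
  rw [bEquiv_apply, map_one β]
  exact Equiv.Perm.one_apply 1

lemma bEquiv_symm_one : (bEquiv β hinj hreg).symm 1 = 1 := by
  rw [← bEquiv_one β hinj hreg, Equiv.symm_apply_apply]

lemma s_mul (hnorm : IsNormalizedByLeftTranslations Γ β.range) (γ : Γ) (x y : G) :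
    (bEquiv β hinj hreg).symm (γ * bEquiv β hinj hreg (x * y))
      = (bEquiv β hinj hreg).symm (γ * bEquiv β hinj hreg x) * ((bEquiv β hinj hreg).symm γ)⁻¹
        * (bEquiv β hinj hreg).symm (γ * bEquiv β hinj hreg y) := by
  obtain ⟨x', hx'⟩ := hnorm γ (β x) ⟨x, rfl⟩
  have key : ∀ δ : Γ, β x' (γ * δ) = γ * β x δ := by
    intro δ
    have h0 := congrArg (fun p : Equiv.Perm Γ => p (γ * δ)) hx'
    simpa [Equiv.Perm.mul_apply, Equiv.Perm.inv_def, Equiv.mulLeft_symm] using h0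
  have e1 : ∀ z : G, bEquiv β hinj hreg (x' * (bEquiv β hinj hreg).symm
      (γ * bEquiv β hinj hreg z)) = γ * bEquiv β hinj hreg (x * z) := by
    intro z
    rw [← key1 β hinj hreg, Equiv.apply_symm_apply, key, key1]
  have e2 : x' * (bEquiv β hinj hreg).symm γ
      = (bEquiv β hinj hreg).symm (γ * bEquiv β hinj hreg x) := by
    have h1 := e1 1
    rw [mul_one, bEquiv_one β hinj hreg, mul_one] at h1
    exact (Equiv.eq_symm_apply _).mpr h1
  have h2 : x' * (bEquiv β hinj hreg).symm (γ * bEquiv β hinj hreg y)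
      = (bEquiv β hinj hreg).symm (γ * bEquiv β hinj hreg (x * y)) :=
    (Equiv.eq_symm_apply _).mpr (e1 y)
  rw [← h2, ← e2]
  simp [mul_assoc]

/-- The automorphism component of the holomorph embedding. -/
noncomputable def phiAut (hnorm : IsNormalizedByLeftTranslations Γ β.range) (γ : Γ) :
    MulAut G :=
  { toFun := fun x => ((bEquiv β hinj hreg).symm γ)⁻¹
      * (bEquiv β hinj hreg).symm (γ * bEquiv β hinj hreg x)
    invFun := fun y => (bEquiv β hinj hreg).symm
      (γ⁻¹ * bEquiv β hinj hreg ((bEquiv β hinj hreg).symm γ * y))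
    left_inv := by intro x; simp
    right_inv := by intro y; simp
    map_mul' := by
      intro x y
      rw [s_mul β hinj hreg hnorm]
      group }

lemma phiAut_apply (hnorm : IsNormalizedByLeftTranslations Γ β.range) (γ : Γ) (x : G) :
    phiAut β hinj hreg hnorm γ x = ((bEquiv β hinj hreg).symm γ)⁻¹
      * (bEquiv β hinj hreg).symm (γ * bEquiv β hinj hreg x) := rfl

/-- The holomorph embedding associated to a regular normalized embedding `β`. -/
noncomputable def thetaHom (hnorm : IsNormalizedByLeftTranslations Γ β.range) :
    Γ →* Hol G where
  toFun γ := ⟨(bEquiv β hinj hreg).symm γ, phiAut β hinj hreg hnorm γ⟩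
  map_one' := by
    refine jHom_injective G ?_
    rw [map_one (jHom G)]
    ext x
    simp [phiAut_apply, bEquiv_symm_one β hinj hreg]
  map_mul' γ δ := by
    refine jHom_injective G ?_
    rw [map_mul (jHom G)]
    ext x
    simp [phiAut_apply, Equiv.Perm.mul_apply, mul_assoc]

lemma thetaHom_left (hnorm) (γ : Γ) :
    (thetaHom β hinj hreg hnorm γ).left = (bEquiv β hinj hreg).symm γ := rfl

lemma thetaHom_right (hnorm) (γ : Γ) :
    (thetaHom β hinj hreg hnorm γ).right = phiAut β hinj hreg hnorm γ := rfl

lemma jHom_thetaHom (hnorm) (γ : Γ) (x : G) :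
    jHom G (thetaHom β hinj hreg hnorm γ) x
      = (bEquiv β hinj hreg).symm (γ * bEquiv β hinj hreg x) := by
  simp [thetaHom_left, thetaHom_right, phiAut_apply, mul_inv_cancel_left]

lemma thetaHom_injective (hnorm) : Function.Injective (thetaHom β hinj hreg hnorm) := by
  rw [injective_iff_map_eq_one]
  intro γ h
  have h1 := congrArg SemidirectProduct.left h
  rw [thetaHom_left] at h1
  have : (bEquiv β hinj hreg).symm γ = 1 := h1
  rw [Equiv.symm_apply_eq, bEquiv_one β hinj hreg] at this
  exact this

lemma thetaHom_range_regular (hnorm) :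
    IsRegularHolSubgroup G (thetaHom β hinj hreg hnorm).range := by
  constructor
  · intro x y
    refine ⟨thetaHom β hinj hreg hnorm
      (bEquiv β hinj hreg y * (bEquiv β hinj hreg x)⁻¹), ⟨_, rfl⟩, ?_⟩
    rw [← jHom_apply, jHom_thetaHom, inv_mul_cancel_right, Equiv.symm_apply_apply]
  · rintro h ⟨γ, rfl⟩ x hx
    rw [← jHom_apply, jHom_thetaHom] at hx
    rw [Equiv.symm_apply_eq] at hx
    have : γ = 1 := by
      have := mul_right_cancel (a := γ) (b := bEquiv β hinj hreg x) (c := 1) ?_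
      · exact this
      · rw [hx, one_mul]
    rw [this, map_one]

end Forward

section Backward
variable {Γ G : Type*} [Group Γ] [Group G]
variable (θ : Γ →* Hol G) (hinj : Function.Injective θ)
  (hreg : IsRegularHolSubgroup G θ.range)

/-- The orbit bijection `Γ ≃ G`, `γ ↦ (θ γ).left`. -/
noncomputable def cEquiv : Γ ≃ G :=
  Equiv.ofBijective (fun γ => (θ γ).left)
    ⟨by
      intro γ δ h
      simp only at h
      have h1 : jHom G (θ (δ⁻¹ * γ)) 1 = 1 := by
        rw [map_mul, map_mul, Equiv.Perm.mul_apply]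
        have hγ1 : jHom G (θ γ) 1 = (θ γ).left := by simp
        have hδ1 : jHom G (θ δ) 1 = (θ δ).left := by simp
        rw [hγ1, h, ← hδ1, ← Equiv.Perm.mul_apply, ← map_mul, ← map_mul,
          inv_mul_cancel]
        simp
      have h2 : θ (δ⁻¹ * γ) = 1 := hreg.2 _ ⟨_, rfl⟩ 1 (by rw [← jHom_apply]; exact h1)
      have h3 : δ⁻¹ * γ = 1 := hinj (by rw [h2, map_one])
      exact (inv_mul_eq_one.mp h3).symm,
    by
      intro y
      obtain ⟨h, ⟨γ, rfl⟩, hy⟩ := hreg.1 1 y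
      exact ⟨γ, by rw [map_one, mul_one] at hy; exact hy⟩⟩

lemma cEquiv_apply (γ : Γ) : cEquiv θ hinj hreg γ = (θ γ).left := rfl

lemma cEquiv_one : cEquiv θ hinj hreg 1 = 1 := by
  rw [cEquiv_apply, map_one, SemidirectProduct.one_left]

lemma key2 (γ δ : Γ) :
    cEquiv θ hinj hreg (γ * δ) = jHom G (θ γ) (cEquiv θ hinj hreg δ) := by
  rw [cEquiv_apply, map_mul, SemidirectProduct.mul_left, jHom_apply, cEquiv_apply]
  rfl

/-- The permutation embedding associated to a regular holomorph embedding `θ`. -/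
noncomputable def betaHom : G →* Equiv.Perm Γ where
  toFun g := (cEquiv θ hinj hreg).symm.permCongr (Equiv.mulLeft g)
  map_one' := by ext γ; simp
  map_mul' g g' := by ext γ; simp [Equiv.Perm.mul_apply, mul_assoc]

lemma betaHom_apply (g : G) (γ : Γ) :
    betaHom θ hinj hreg g γ = (cEquiv θ hinj hreg).symm (g * cEquiv θ hinj hreg γ) := by
  simp [betaHom]

lemma betaHom_injective : Function.Injective (betaHom θ hinj hreg) := by
  rw [injective_iff_map_eq_one]
  intro g h
  have h1 := congrArg (fun p : Equiv.Perm Γ => p 1) h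
  simp only [betaHom_apply, Equiv.Perm.one_apply] at h1
  have h2 : g * cEquiv θ hinj hreg 1 = cEquiv θ hinj hreg 1 :=
    (Equiv.symm_apply_eq _).mp h1
  exact mul_right_cancel (h2.trans (one_mul _).symm)

lemma betaHom_range_regular : IsRegularSubgroup Γ (betaHom θ hinj hreg).range := by
  constructor
  · intro γ δ
    refine ⟨betaHom θ hinj hreg
      (cEquiv θ hinj hreg δ * (cEquiv θ hinj hreg γ)⁻¹), ⟨_, rfl⟩, ?_⟩
    rw [betaHom_apply, inv_mul_cancel_right, Equiv.symm_apply_apply]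
  · rintro ν ⟨g, rfl⟩ γ hγ
    rw [betaHom_apply, Equiv.symm_apply_eq] at hγ
    have hg : g = 1 := mul_right_cancel (hγ.trans (one_mul _).symm)
    rw [hg, map_one]

lemma betaHom_range_normalized :
    IsNormalizedByLeftTranslations Γ (betaHom θ hinj hreg).range := by
  rintro γ ν ⟨g, rfl⟩
  refine ⟨(θ γ).left * (θ γ).right g * ((θ γ).left)⁻¹, ?_⟩
  ext δ
  rw [betaHom_apply]
  simp only [Equiv.Perm.mul_apply, Equiv.Perm.inv_def, Equiv.mulLeft_symm,
    Equiv.coe_mulLeft, betaHom_apply]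
  -- goal: c.symm (aγ * φγ g * aγ⁻¹ * c δ) = γ * c.symm (g * c (γ⁻¹ * δ))
  rw [Equiv.symm_apply_eq]
  have hc : ∀ x : Γ, cEquiv θ hinj hreg (γ * x)
      = (θ γ).left * (θ γ).right (cEquiv θ hinj hreg x) := fun x => key2 θ hinj hreg γ x
  have h1 : cEquiv θ hinj hreg (γ * (cEquiv θ hinj hreg).symm (g * cEquiv θ hinj hreg (γ⁻¹ * δ)))
      = (θ γ).left * (θ γ).right (g * cEquiv θ hinj hreg (γ⁻¹ * δ)) := by
    rw [hc, Equiv.apply_symm_apply]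
  rw [h1, map_mul]
  have h2 : cEquiv θ hinj hreg δ
      = (θ γ).left * (θ γ).right (cEquiv θ hinj hreg (γ⁻¹ * δ)) := by
    rw [← hc, mul_inv_cancel_left]
  rw [h2]
  group

end Backward

section Main
variable (Γ G : Type*) [Group Γ] [Group G]

/-- The fundamental bijection between regular normalized embeddings `G →* Perm Γ`
and regular embeddings `Γ →* Hol G`. -/
noncomputable def embAB :
    {f : G →* Equiv.Perm Γ // Function.Injective f ∧
      (IsRegularSubgroup Γ f.range ∧ IsNormalizedByLeftTranslations Γ f.range)} ≃
    {f : Γ →* Hol G // Function.Injective f ∧ IsRegularHolSubgroup G f.range} where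
  toFun x := ⟨thetaHom x.1 x.2.1 x.2.2.1 x.2.2.2,
    thetaHom_injective x.1 x.2.1 x.2.2.1 x.2.2.2,
    thetaHom_range_regular x.1 x.2.1 x.2.2.1 x.2.2.2⟩
  invFun y := ⟨betaHom y.1 y.2.1 y.2.2,
    betaHom_injective y.1 y.2.1 y.2.2,
    betaHom_range_regular y.1 y.2.1 y.2.2,
    betaHom_range_normalized y.1 y.2.1 y.2.2⟩
  left_inv x := by
    obtain ⟨β, hi, hr, hn⟩ := x
    refine Subtype.ext (MonoidHom.ext fun g => Equiv.ext fun γ => ?_)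
    rw [betaHom_apply, Equiv.symm_apply_eq]
    have hc : ∀ z : Γ, cEquiv (thetaHom β hi hr hn) (thetaHom_injective β hi hr hn)
        (thetaHom_range_regular β hi hr hn) z = (bEquiv β hi hr).symm z := fun z => rfl
    rw [hc, hc]
    show g * (bEquiv β hi hr).symm γ = (bEquiv β hi hr).symm (β g γ)
    refine (Equiv.eq_symm_apply _).mpr ?_
    rw [← key1 β hi hr, Equiv.apply_symm_apply]
  right_inv y := by
    obtain ⟨θ, hi, hr⟩ := y
    have hb' : ∀ x : G, bEquiv (betaHom θ hi hr) (betaHom_injective θ hi hr)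
        (betaHom_range_regular θ hi hr) x = (cEquiv θ hi hr).symm x := fun x => by
      rw [bEquiv_apply, betaHom_apply, cEquiv_one θ hi hr, mul_one]
    have hb's : ∀ γ : Γ, (bEquiv (betaHom θ hi hr) (betaHom_injective θ hi hr)
        (betaHom_range_regular θ hi hr)).symm γ = cEquiv θ hi hr γ := fun γ => by
      rw [Equiv.symm_apply_eq, hb', Equiv.symm_apply_apply]
    refine Subtype.ext (MonoidHom.ext fun γ => SemidirectProduct.ext ?_ ?_)
    · rw [thetaHom_left, hb's, cEquiv_apply]
    · rw [thetaHom_right]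
      refine MulEquiv.ext fun x => ?_
      rw [phiAut_apply, hb', hb's, hb's]
      have h1 : cEquiv θ hi hr (γ * (cEquiv θ hi hr).symm x)
          = (θ γ).left * (θ γ).right x := by
        rw [key2 θ hi hr, jHom_apply, Equiv.apply_symm_apply]
      rw [h1, cEquiv_apply, inv_mul_cancel_left]

/-- Isomorphisms onto a subgroup isomorphic to `H` are in bijection with `MulAut H`. -/
noncomputable def mulEquivToAut {H K : Type*} [Group H] [Group K] (N : Subgroup K)
    (h : Nonempty (N ≃* H)) : (H ≃* N) ≃ MulAut H where
  toFun a := a.trans h.some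
  invFun m := (m : H ≃* H).trans h.some.symm
  left_inv a := by ext x; simp
  right_inv m := by ext x; simp

/-- Counting injective homomorphisms with a range property: subgroups times automorphisms. -/
lemma card_inj_homs (H K : Type*) [Group H] [Group K] (Q : Subgroup K → Prop) :
    Nat.card {f : H →* K // Function.Injective f ∧ Q f.range}
      = Nat.card {N : Subgroup K // Nonempty (N ≃* H) ∧ Q N} * Nat.card (MulAut H) := by
  classical
  rw [← Nat.card_prod]
  refine Nat.card_congr ?_
  refine (Equiv.sigmaFiberEquiv (f := fun f : {f : H →* K // Function.Injective f ∧ Q f.range} =>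
      (⟨f.1.range, ⟨(MonoidHom.ofInjective f.2.1).symm⟩, f.2.2⟩ :
        {N : Subgroup K // Nonempty (N ≃* H) ∧ Q N}))).symm.trans ?_
  refine Equiv.sigmaEquivProdOfEquiv fun N => ?_
  refine Equiv.trans ?_ (mulEquivToAut N.1 N.2.1)
  exact {
    toFun := fun f => (MonoidHom.ofInjective f.1.2.1).trans
      (MulEquiv.subgroupCongr (congrArg Subtype.val f.2))
    invFun := fun e => ⟨⟨N.1.subtype.comp e.toMonoidHom,
      N.1.subtype_injective.comp e.injective, by
        rw [MonoidHom.range_comp, MonoidHom.range_eq_top_of_surjective _ e.surjective,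
          ← MonoidHom.range_eq_map, Subgroup.range_subtype]
        exact N.2.2⟩, by
        ext1
        simp only
        rw [MonoidHom.range_comp, MonoidHom.range_eq_top_of_surjective _ e.surjective,
          ← MonoidHom.range_eq_map, Subgroup.range_subtype]⟩
    left_inv := fun f => by
      apply Subtype.ext; apply Subtype.ext; ext x
      simp [MonoidHom.ofInjective_apply]
    right_inv := fun e => by
      ext x
      simp [MulEquiv.trans_apply, MonoidHom.ofInjective_apply]
      rfl }

end Main

/-- **Lemma (Byott).** For finite groups `Γ`, `G` of the same order, the number
`e(G,Γ)` of regular subgroups of `Perm Γ` isomorphic to `G` and normalised by the left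
translations equals `(|Aut Γ| / |Aut G|) · e'(G,Γ)`, where `e'(G,Γ)` is the number
of regular subgroups of `Hol(G)` isomorphic to `Γ`. -/
theorem count_hgs_via_holomorph (Γ G : Type) [Group Γ] [Group G] [Finite Γ] [Finite G]
    (hcard : Nat.card Γ = Nat.card G) :
    (Nat.card {N : Subgroup (Equiv.Perm Γ) //
        Nonempty (N ≃* G) ∧ IsRegularSubgroup Γ N ∧ IsNormalizedByLeftTranslations Γ N} : ℚ) =
      (Nat.card (MulAut Γ) : ℚ) / (Nat.card (MulAut G) : ℚ) *
        (Nat.card {C : Subgroup (Hol G) //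
          Nonempty (C ≃* Γ) ∧ IsRegularHolSubgroup G C} : ℚ) := by
  classical
  have hA := card_inj_homs G (Equiv.Perm Γ)
    (fun N => IsRegularSubgroup Γ N ∧ IsNormalizedByLeftTranslations Γ N)
  have hB := card_inj_homs Γ (Hol G) (fun C => IsRegularHolSubgroup G C)
  have hAB : Nat.card {f : G →* Equiv.Perm Γ // Function.Injective f ∧
      (IsRegularSubgroup Γ f.range ∧ IsNormalizedByLeftTranslations Γ f.range)}
      = Nat.card {f : Γ →* Hol G // Function.Injective f ∧ IsRegularHolSubgroup G f.range} :=
    Nat.card_congr (embAB Γ G)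
  rw [hA, hB] at hAB
  have hfin : Finite (MulAut G) :=
    Finite.of_injective (fun e : MulAut G => (e : G ≃ G))
      (fun a b h => MulEquiv.ext fun x => congrFun (congrArg (fun e : G ≃ G => (e : G → G)) h) x)
  have hne : Nonempty (MulAut G) := ⟨1⟩
  have haG : (Nat.card (MulAut G) : ℚ) ≠ 0 := by
    exact_mod_cast Nat.card_pos.ne'
  rw [div_mul_eq_mul_div, eq_div_iff haG]
  have : (Nat.card {N : Subgroup (Equiv.Perm Γ) //
      Nonempty (N ≃* G) ∧ IsRegularSubgroup Γ N ∧ IsNormalizedByLeftTranslations Γ N} : ℚ)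
      * (Nat.card (MulAut G) : ℚ)
      = (Nat.card {C : Subgroup (Hol G) // Nonempty (C ≃* Γ) ∧ IsRegularHolSubgroup G C} : ℚ)
        * (Nat.card (MulAut Γ) : ℚ) := by exact_mod_cast hAB
  rw [this]; ring
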